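/- Let Y1, Y0 be {0,1}-valued random variables with pr(Y1 = 1) > 0. Then max(0, (pr(Y1=1) - pr(Y0=1))/pr(Y1=1)) ≤ pr(Y0 = 0 | Y1 = 1) ≤ min(1, pr(Y0 = 0)/pr(Y1 = 1)), and both bounds are attained by some joint distribution with the given marginals. -/

import Mathlib

open MeasureTheory Finset

/-- Probability of an event as a real number. -/
noncomputable def pr {Ω : Type*} [MeasurableSpace Ω] (μ : Measure Ω) (s : Set Ω) : ℝ :=
  (μ s).toReal

lemma pr_nonneg {Ω : Type*} [MeasurableSpace Ω] (μ : Measure Ω) (s : Set Ω) :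
    0 ≤ pr μ s := ENNReal.toReal_nonneg

lemma pr_mono {Ω : Type*} [MeasurableSpace Ω] (μ : Measure Ω) [IsFiniteMeasure μ]
    {s t : Set Ω} (h : s ⊆ t) : pr μ s ≤ pr μ t :=
  ENNReal.toReal_mono (measure_ne_top μ t) (measure_mono h)

lemma pr_union_le {Ω : Type*} [MeasurableSpace Ω] (μ : Measure Ω) [IsFiniteMeasure μ]
    (s t : Set Ω) : pr μ (s ∪ t) ≤ pr μ s + pr μ t := by
  rw [pr, pr, pr, ← ENNReal.toReal_add (measure_ne_top μ s) (measure_ne_top μ t)]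
  exact ENNReal.toReal_mono (by finiteness) (measure_union_le s t)

lemma pr_add_one {Ω : Type*} [MeasurableSpace Ω] (μ : Measure Ω) [IsProbabilityMeasure μ]
    {s t : Set Ω} (ht : MeasurableSet t) (hd : Disjoint s t) (hu : s ∪ t = Set.univ) :
    pr μ s + pr μ t = 1 := by
  rw [pr, pr, ← ENNReal.toReal_add (measure_ne_top _ _) (measure_ne_top _ _),
    ← measure_union hd ht, hu, measure_univ, ENNReal.toReal_one]

lemma pr_empty {Ω : Type*} [MeasurableSpace Ω] (μ : Measure Ω) {s : Set Ω} (h : s = ∅) :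
    pr μ s = 0 := by simp [pr, h]

/-- Tian–Pearl sharp bounds on the probability of causation for binary outcomes without
monotonicity, together with attainment of both bounds by couplings of the marginals. -/
theorem pc_binary_sharp_bounds {Ω : Type*} [MeasurableSpace Ω] (μ : Measure Ω)
    [IsProbabilityMeasure μ] (Y1 Y0 : Ω → ℕ)
    (hY1m : Measurable Y1) (hY0m : Measurable Y0)
    (hY1 : ∀ ω, Y1 ω ≤ 1) (hY0 : ∀ ω, Y0 ω ≤ 1)
    (hpos : 0 < pr μ {ω | Y1 ω = 1}) :
    (max 0 ((pr μ {ω | Y1 ω = 1} - pr μ {ω | Y0 ω = 1}) / pr μ {ω | Y1 ω = 1})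
        ≤ pr μ {ω | Y0 ω = 0 ∧ Y1 ω = 1} / pr μ {ω | Y1 ω = 1}) ∧
    (pr μ {ω | Y0 ω = 0 ∧ Y1 ω = 1} / pr μ {ω | Y1 ω = 1}
        ≤ min 1 (pr μ {ω | Y0 ω = 0} / pr μ {ω | Y1 ω = 1})) ∧
    (∃ q : ℕ → ℕ → ℝ,
      (∀ k l, 0 ≤ q k l) ∧
      (∀ k, ∑ l ∈ Finset.range 2, q k l = pr μ {ω | Y1 ω = k}) ∧
      (∀ l, ∑ k ∈ Finset.range 2, q k l = pr μ {ω | Y0 ω = l}) ∧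
      q 1 0 / pr μ {ω | Y1 ω = 1}
        = max 0 ((pr μ {ω | Y1 ω = 1} - pr μ {ω | Y0 ω = 1}) / pr μ {ω | Y1 ω = 1})) ∧
    (∃ q : ℕ → ℕ → ℝ,
      (∀ k l, 0 ≤ q k l) ∧
      (∀ k, ∑ l ∈ Finset.range 2, q k l = pr μ {ω | Y1 ω = k}) ∧
      (∀ l, ∑ k ∈ Finset.range 2, q k l = pr μ {ω | Y0 ω = l}) ∧
      q 1 0 / pr μ {ω | Y1 ω = 1}
        = min 1 (pr μ {ω | Y0 ω = 0} / pr μ {ω | Y1 ω = 1})) := by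
  set a := pr μ {ω | Y1 ω = 1} with ha
  set b := pr μ {ω | Y0 ω = 1} with hb
  set c := pr μ {ω | Y0 ω = 0} with hc
  set p := pr μ {ω | Y0 ω = 0 ∧ Y1 ω = 1} with hp
  have hbc : c + b = 1 := by
    refine pr_add_one μ (hY0m (measurableSet_singleton 1)) ?_ ?_
    · rw [Set.disjoint_left]; intro ω h1 h2; simp only [Set.mem_setOf_eq] at h1 h2; omega
    · ext ω; simp only [Set.mem_union, Set.mem_setOf_eq, Set.mem_univ, iff_true]
      have := hY0 ω; omega
  have haa : pr μ {ω | Y1 ω = 0} + a = 1 := by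
    refine pr_add_one μ (hY1m (measurableSet_singleton 1)) ?_ ?_
    · rw [Set.disjoint_left]; intro ω h1 h2; simp only [Set.mem_setOf_eq] at h1 h2; omega
    · ext ω; simp only [Set.mem_union, Set.mem_setOf_eq, Set.mem_univ, iff_true]
      have := hY1 ω; omega
  have ha0 : pr μ {ω | Y1 ω = 0} = 1 - a := by linarith
  have ha1 : a ≤ 1 := by have := pr_nonneg μ {ω | Y1 ω = 0}; linarith
  have hk2 : ∀ k : ℕ, 2 ≤ k → pr μ {ω | Y1 ω = k} = 0 := by
    intro k hk; apply pr_empty; ext ω; simp only [Set.mem_setOf_eq, Set.mem_empty_iff_false,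
      iff_false]; have := hY1 ω; omega
  have hl2 : ∀ l : ℕ, 2 ≤ l → pr μ {ω | Y0 ω = l} = 0 := by
    intro l hl; apply pr_empty; ext ω; simp only [Set.mem_setOf_eq, Set.mem_empty_iff_false,
      iff_false]; have := hY0 ω; omega
  have hpa : p ≤ a := pr_mono μ (fun ω h => h.2)
  have hpc : p ≤ c := pr_mono μ (fun ω h => h.1)
  have hapb : a ≤ p + b := by
    have hsub : {ω | Y1 ω = 1} ⊆ {ω | Y0 ω = 0 ∧ Y1 ω = 1} ∪ {ω | Y0 ω = 1} := by
      intro ω h; simp only [Set.mem_setOf_eq] at h ⊢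
      have := hY0 ω
      rcases Nat.lt_or_ge (Y0 ω) 1 with h' | h'
      · exact Or.inl ⟨by omega, h⟩
      · exact Or.inr (le_antisymm (hY0 ω) h')
    calc a ≤ pr μ ({ω | Y0 ω = 0 ∧ Y1 ω = 1} ∪ {ω | Y0 ω = 1}) := pr_mono μ hsub
      _ ≤ p + b := pr_union_le μ _ _
  have hb0 : 0 ≤ b := pr_nonneg μ _
  have hc0 : 0 ≤ c := pr_nonneg μ _
  have hp0 : 0 ≤ p := pr_nonneg μ _
  refine ⟨?_, ?_, ?_, ?_⟩
  · exact max_le (div_nonneg hp0 hpos.le)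
      (div_le_div_of_nonneg_right (by linarith) hpos.le)
  · exact le_min ((div_le_one hpos).mpr hpa) (div_le_div_of_nonneg_right hpc hpos.le)
  · refine ⟨fun k l => if k = 1 ∧ l = 0 then max 0 (a - b) else if k = 1 ∧ l = 1 then min a b
      else if k = 0 ∧ l = 0 then c - max 0 (a - b) else if k = 0 ∧ l = 1 then b - min a b
      else 0, ?_, ?_, ?_, ?_⟩
    · intro k l
      dsimp only
      split_ifs with h1 h2 h3 h4
      · exact le_max_left _ _
      · exact le_min hpos.le hb0
      · exact sub_nonneg.mpr (max_le hc0 (by linarith))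
      · exact sub_nonneg.mpr (min_le_right a b)
      · exact le_refl 0
    · intro k
      rw [Finset.sum_range_succ, Finset.sum_range_succ, Finset.sum_range_zero]
      match k with
      | 0 =>
        norm_num
        rw [ha0]
        rcases le_total a b with h | h
        · rw [max_eq_left (by linarith : a - b ≤ 0), min_eq_left h]; linarith
        · rw [max_eq_right (by linarith : (0:ℝ) ≤ a - b), min_eq_right h]; linarith
      | 1 =>
        norm_num
        rcases le_total a b with h | h
        · rw [max_eq_left (by linarith : a - b ≤ 0), min_eq_left h]; linarith
        · rw [max_eq_right (by linarith : (0:ℝ) ≤ a - b), min_eq_right h]; linarith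
      | (n+2) =>
        simp only [show ¬(n+2 = 1) by omega, show ¬(n+2 = 0) by omega, false_and, if_false]
        rw [hk2 (n+2) (by omega)]; ring
    · intro l
      rw [Finset.sum_range_succ, Finset.sum_range_succ, Finset.sum_range_zero]
      match l with
      | 0 => norm_num; exact hc
      | 1 => norm_num; exact hb
      | (n+2) =>
        simp only [show ¬(n+2 = 1) by omega, show ¬(n+2 = 0) by omega, and_false, if_false]
        rw [hl2 (n+2) (by omega)]; ring
    · norm_num
      rcases le_total a b with h | h
      · rw [max_eq_left (by linarith : a - b ≤ 0),
          max_eq_left (div_nonpos_of_nonpos_of_nonneg (by linarith) hpos.le), zero_div]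
      · rw [max_eq_right (by linarith : (0:ℝ) ≤ a - b),
          max_eq_right (div_nonneg (by linarith) hpos.le)]
  · refine ⟨fun k l => if k = 1 ∧ l = 0 then min a c else if k = 1 ∧ l = 1 then a - min a c
      else if k = 0 ∧ l = 0 then c - min a c else if k = 0 ∧ l = 1 then b - a + min a c
      else 0, ?_, ?_, ?_, ?_⟩
    · intro k l
      dsimp only
      split_ifs with h1 h2 h3 h4
      · exact le_min hpos.le hc0
      · exact sub_nonneg.mpr (min_le_left a c)
      · exact sub_nonneg.mpr (min_le_right a c)
      · rcases le_total a c with h | h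
        · rw [min_eq_left h]; linarith
        · rw [min_eq_right h]; linarith
      · exact le_refl 0
    · intro k
      rw [Finset.sum_range_succ, Finset.sum_range_succ, Finset.sum_range_zero]
      match k with
      | 0 =>
        norm_num
        rw [ha0]
        linarith
      | 1 => norm_num; exact ha
      | (n+2) =>
        simp only [show ¬(n+2 = 1) by omega, show ¬(n+2 = 0) by omega, false_and, if_false]
        rw [hk2 (n+2) (by omega)]; ring
    · intro l
      rw [Finset.sum_range_succ, Finset.sum_range_succ, Finset.sum_range_zero]
      match l with
      | 0 => norm_num; exact hc
      | 1 => norm_num; exact hb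
      | (n+2) =>
        simp only [show ¬(n+2 = 1) by omega, show ¬(n+2 = 0) by omega, and_false, if_false]
        rw [hl2 (n+2) (by omega)]; ring
    · norm_num
      rcases le_total a c with h | h
      · rw [min_eq_left h, min_eq_left ((one_le_div hpos).mpr h), div_self hpos.ne']
      · rw [min_eq_right h, min_eq_right ((div_le_one hpos).mpr h)]
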